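/- arXiv:2105.11042 — 4 statements merged into one kernel-verified Lean document; each statement's English description precedes it below -/
import Mathlib

section
/- The function f₃(a,b,y) = 4y(a+b+y)φ(a+b+y) for a,b,y > 0 (and 0 otherwise), where φ is the standard normal density, is a probability density on ℝ³, i.e., ∫∫∫_{(0,∞)³} 4y(a+b+y)φ(a+b+y) da db dy = 1. -/
open MeasureTheory Real Set Filter

noncomputable def stdGaussianPDF (x : ℝ) : ℝ :=
  (Real.sqrt (2 * Real.pi))⁻¹ * Real.exp (-x ^ 2 / 2)

namespace F3Aux

noncomputable def Psi (s : ℝ) : ℝ := ∫ t in Ioi s, stdGaussianPDF t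

lemma phi_eq (x : ℝ) :
    stdGaussianPDF x = (Real.sqrt (2 * Real.pi))⁻¹ * Real.exp (-(1/2 : ℝ) * x ^ 2) := by
  unfold stdGaussianPDF; ring_nf

lemma phi_nonneg (x : ℝ) : 0 ≤ stdGaussianPDF x := by
  unfold stdGaussianPDF; positivity

lemma continuous_phi : Continuous stdGaussianPDF := by
  unfold stdGaussianPDF; continuity

lemma integrable_phi : Integrable stdGaussianPDF := by
  have := (integrable_exp_neg_mul_sq (by norm_num : (0:ℝ) < 1/2)).const_mul
    (Real.sqrt (2 * Real.pi))⁻¹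
  refine this.congr (Eventually.of_forall fun x => ?_)
  rw [phi_eq]

lemma integrable_mul_phi : Integrable fun x : ℝ => x * stdGaussianPDF x := by
  have := (integrable_mul_exp_neg_mul_sq (by norm_num : (0:ℝ) < 1/2)).const_mul
    (Real.sqrt (2 * Real.pi))⁻¹
  refine this.congr (Eventually.of_forall fun x => ?_)
  simp only [phi_eq]; ring

lemma integrable_sq_mul_phi : Integrable fun x : ℝ => x ^ 2 * stdGaussianPDF x := by
  have h := (integrable_rpow_mul_exp_neg_mul_sq (by norm_num : (0:ℝ) < 1/2)
    (by norm_num : (-1:ℝ) < 2)).const_mul (Real.sqrt (2 * Real.pi))⁻¹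
  refine h.congr (Eventually.of_forall fun x => ?_)
  simp only [phi_eq, show ((2:ℝ)) = ((2:ℕ):ℝ) by norm_num, Real.rpow_natCast]
  ring

lemma hasDerivAt_phi (x : ℝ) :
    HasDerivAt stdGaussianPDF (-x * stdGaussianPDF x) x := by
  have h1 : HasDerivAt (fun x : ℝ => -x ^ 2 / 2) (-x) x := by
    have := ((hasDerivAt_pow 2 x).fun_neg).div_const 2
    refine this.congr_deriv ?_
    simp; ring
  have h3 := (h1.exp).const_mul (Real.sqrt (2 * Real.pi))⁻¹
  refine h3.congr_deriv ?_
  unfold stdGaussianPDF; ring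

lemma tendsto_phi : Tendsto stdGaussianPDF atTop (nhds 0) := by
  have h1 : Tendsto (fun x : ℝ => -x ^ 2 / 2) atTop atBot := by
    have := Tendsto.const_mul_atTop_of_neg (show (-1/2:ℝ) < 0 by norm_num)
      (tendsto_pow_atTop (by norm_num : 2 ≠ 0))
    exact this.congr (fun x => by ring)
  have h3 := (Real.tendsto_exp_atBot.comp h1).const_mul (Real.sqrt (2 * Real.pi))⁻¹
  rw [mul_zero] at h3
  exact Tendsto.congr (fun x => by simp [stdGaussianPDF, Function.comp]) h3

lemma tendsto_exp_neg_half : Tendsto (fun x : ℝ => Real.exp (-(1/2) * x)) atTop (nhds 0) := by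
  apply Real.tendsto_exp_atBot.comp
  exact Tendsto.const_mul_atTop_of_neg (by norm_num) tendsto_id

lemma tendsto_id_mul_phi : Tendsto (fun x : ℝ => x * stdGaussianPDF x) atTop (nhds 0) := by
  have ho := (rpow_mul_exp_neg_mul_sq_isLittleO_exp_neg (by norm_num : (0:ℝ) < 1/2)
    1).isBigO.trans_tendsto tendsto_exp_neg_half
  simp only [Real.rpow_one] at ho
  have h := ho.const_mul (Real.sqrt (2 * Real.pi))⁻¹
  rw [mul_zero] at h
  refine Tendsto.congr (fun x => ?_) h
  simp only [phi_eq]; ring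

lemma tendsto_sq_mul_phi : Tendsto (fun x : ℝ => x ^ 2 * stdGaussianPDF x) atTop (nhds 0) := by
  have ho := (rpow_mul_exp_neg_mul_sq_isLittleO_exp_neg (by norm_num : (0:ℝ) < 1/2)
    2).isBigO.trans_tendsto tendsto_exp_neg_half
  simp only [show ((2:ℝ)) = ((2:ℕ):ℝ) by norm_num, Real.rpow_natCast] at ho
  have h := ho.const_mul (Real.sqrt (2 * Real.pi))⁻¹
  rw [mul_zero] at h
  refine Tendsto.congr (fun x => ?_) h
  simp only [phi_eq]; ring

lemma tail_mul (s : ℝ) : ∫ t in Ioi s, t * stdGaussianPDF t = stdGaussianPDF s := by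
  have h := integral_Ioi_of_hasDerivAt_of_tendsto' (a := s)
    (f := fun t => -stdGaussianPDF t) (f' := fun t => t * stdGaussianPDF t) (m := 0)
    (fun x _ => by simpa using (hasDerivAt_phi x).fun_neg)
    integrable_mul_phi.integrableOn (by simpa using tendsto_phi.neg)
  simpa using h

lemma Psi_nonneg (s : ℝ) : 0 ≤ Psi s :=
  setIntegral_nonneg measurableSet_Ioi fun x _ => phi_nonneg x

lemma Psi_eq (s : ℝ) : Psi s = Psi 0 - ∫ x in (0:ℝ)..s, stdGaussianPDF x := by
  have h1 := intervalIntegral.integral_Iic_add_Ioi (b := s) (μ := volume)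
    integrable_phi.integrableOn integrable_phi.integrableOn
  have h2 := intervalIntegral.integral_Iic_add_Ioi (b := (0:ℝ)) (μ := volume)
    integrable_phi.integrableOn integrable_phi.integrableOn
  have h3 := intervalIntegral.integral_Iic_sub_Iic (a := (0:ℝ)) (b := s) (μ := volume)
    integrable_phi.integrableOn integrable_phi.integrableOn
  unfold Psi
  linarith

lemma hasDerivAt_Psi (s : ℝ) : HasDerivAt Psi (-stdGaussianPDF s) s := by
  have h : HasDerivAt (fun u => ∫ x in (0:ℝ)..u, stdGaussianPDF x) (stdGaussianPDF s) s :=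
    intervalIntegral.integral_hasDerivAt_right
      (integrable_phi.intervalIntegrable)
      (continuous_phi.stronglyMeasurableAtFilter _ _)
      continuous_phi.continuousAt
  have h2 := (h.const_sub (Psi 0))
  refine HasDerivAt.congr_of_eventuallyEq ?_ (Eventually.of_forall fun x => (Psi_eq x))
  simpa using h2

lemma continuous_Psi : Continuous Psi :=
  continuous_iff_continuousAt.2 fun s => (hasDerivAt_Psi s).continuousAt

lemma tendsto_Psi : Tendsto Psi atTop (nhds 0) := by
  have h := intervalIntegral_tendsto_integral_Ioi 0 integrable_phi.integrableOn tendsto_id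
  have h2 : Tendsto (fun s => Psi 0 - ∫ x in (0:ℝ)..s, stdGaussianPDF x) atTop
      (nhds (Psi 0 - Psi 0)) := tendsto_const_nhds.sub h
  rw [sub_self] at h2
  exact Tendsto.congr (fun s => (Psi_eq s).symm) h2

lemma mul_Psi_le {t : ℝ} (ht : 0 < t) : t * Psi t ≤ stdGaussianPDF t := by
  have h1 : t * Psi t = ∫ u in Ioi t, t * stdGaussianPDF u := by
    unfold Psi; rw [integral_const_mul]
  rw [h1, ← tail_mul t]
  apply setIntegral_mono_on
    (integrable_phi.integrableOn.const_mul t) integrable_mul_phi.integrableOn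
    measurableSet_Ioi
  intro u hu
  exact mul_le_mul_of_nonneg_right (le_of_lt hu) (phi_nonneg u)

lemma tendsto_mul_Psi : Tendsto (fun t : ℝ => t * Psi t) atTop (nhds 0) := by
  apply squeeze_zero' (Eventually.filter_mono (le_refl _) ?_) ?_ tendsto_phi
  · filter_upwards [eventually_gt_atTop 0] with t ht
    exact mul_nonneg ht.le (Psi_nonneg t)
  · filter_upwards [eventually_gt_atTop 0] with t ht
    exact mul_Psi_le ht

lemma tendsto_sq_mul_Psi : Tendsto (fun t : ℝ => t ^ 2 * Psi t) atTop (nhds 0) := by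
  apply squeeze_zero' ?_ ?_ tendsto_id_mul_phi
  · filter_upwards [eventually_gt_atTop 0] with t _
    exact mul_nonneg (by positivity) (Psi_nonneg t)
  · filter_upwards [eventually_gt_atTop 0] with t ht
    calc t ^ 2 * Psi t = t * (t * Psi t) := by ring
    _ ≤ t * stdGaussianPDF t := mul_le_mul_of_nonneg_left (mul_Psi_le ht) ht.le

lemma tail_sq (s : ℝ) :
    ∫ t in Ioi s, t ^ 2 * stdGaussianPDF t = s * stdGaussianPDF s + Psi s := by
  have h := integral_Ioi_of_hasDerivAt_of_tendsto' (a := s)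
    (f := fun t => -(t * stdGaussianPDF t) - Psi t)
    (f' := fun t => t ^ 2 * stdGaussianPDF t) (m := 0)
    (fun x _ => by
      have h1 := ((hasDerivAt_id x).fun_mul (hasDerivAt_phi x)).fun_neg.fun_sub (hasDerivAt_Psi x)
      refine h1.congr_deriv ?_
      simp; ring)
    integrable_sq_mul_phi.integrableOn
    (by simpa using tendsto_id_mul_phi.neg.sub tendsto_Psi)
  rw [h]; ring

lemma mul_Psi_integrableOn : IntegrableOn (fun t : ℝ => t * Psi t) (Ioi 0) := by
  apply Integrable.mono' integrable_phi.integrableOn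
    ((continuous_id.mul continuous_Psi).aestronglyMeasurable.restrict)
  filter_upwards [ae_restrict_mem measurableSet_Ioi] with t ht
  simp only [id_eq, Real.norm_eq_abs, Pi.mul_apply]
  rw [abs_of_nonneg (mul_nonneg (le_of_lt ht) (Psi_nonneg t))]
  exact mul_Psi_le ht

lemma Psi_zero : Psi 0 = 1 / 2 := by
  have h : Psi 0 = (Real.sqrt (2 * Real.pi))⁻¹ *
      ∫ x in Ioi (0:ℝ), Real.exp (-(1/2 : ℝ) * x ^ 2) := by
    unfold Psi
    rw [← integral_const_mul]
    exact setIntegral_congr_fun measurableSet_Ioi fun x _ => phi_eq x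
  rw [h, integral_gaussian_Ioi, show Real.pi / (1/2) = 2 * Real.pi by ring]
  have hpos : (0:ℝ) < Real.sqrt (2 * Real.pi) :=
    Real.sqrt_pos.2 (by positivity)
  field_simp

lemma inner_integral (s : ℝ) :
    ∫ y in Ioi (0:ℝ), 4 * y * (s + y) * stdGaussianPDF (s + y) = 4 * Psi s := by
  have hint : IntegrableOn (fun y : ℝ => 4 * y * (s + y) * stdGaussianPDF (s + y)) (Ioi 0) := by
    have hg : Integrable (fun t : ℝ => 4 * (t ^ 2 * stdGaussianPDF t)
        - 4 * s * (t * stdGaussianPDF t)) := by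
      exact (integrable_sq_mul_phi.const_mul 4).sub (integrable_mul_phi.const_mul (4 * s))
    have := (hg.comp_add_left s)
    refine (this.congr (Eventually.of_forall fun y => ?_)).integrableOn
    ring
  have h := integral_Ioi_of_hasDerivAt_of_tendsto' (a := (0:ℝ))
    (f := fun y => 4 * (-(y * stdGaussianPDF (s + y)) - Psi (s + y)))
    (f' := fun y => 4 * y * (s + y) * stdGaussianPDF (s + y)) (m := 0)
    (fun y _ => by
      have hadd : HasDerivAt (fun y : ℝ => s + y) 1 y := (hasDerivAt_id y).const_add s
      have hphi : HasDerivAt (fun y : ℝ => stdGaussianPDF (s + y))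
          (-(s + y) * stdGaussianPDF (s + y) * 1) y :=
        (hasDerivAt_phi (s + y)).comp y hadd
      have hpsi : HasDerivAt (fun y : ℝ => Psi (s + y)) (-stdGaussianPDF (s + y) * 1) y :=
        (hasDerivAt_Psi (s + y)).comp y hadd
      have h1 := ((((hasDerivAt_id y).fun_mul hphi).fun_neg.fun_sub hpsi).const_mul (4:ℝ))
      refine h1.congr_deriv ?_
      simp only [id_eq]; ring)
    hint
    (by
      have ht : Tendsto (fun y : ℝ => s + y) atTop atTop := tendsto_atTop_add_const_left atTop s tendsto_id
      have h1 : Tendsto (fun y : ℝ => y * stdGaussianPDF (s + y)) atTop (nhds 0) := by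
        have ha := tendsto_id_mul_phi.comp ht
        have hb := (tendsto_phi.comp ht).const_mul s
        rw [mul_zero] at hb
        have := ha.sub hb
        rw [sub_zero] at this
        refine Tendsto.congr (fun y => ?_) this
        simp [Function.comp]; ring
      have h2 := (tendsto_Psi.comp ht)
      have := ((h1.neg.sub h2).const_mul (4:ℝ))
      simpa using this)
  rw [h]
  simp

lemma mid_integral {a : ℝ} (ha : 0 < a) :
    ∫ b in Ioi (0:ℝ), 4 * Psi (a + b) = 4 * (stdGaussianPDF a - a * Psi a) := by
  have hint : IntegrableOn (fun b : ℝ => 4 * Psi (a + b)) (Ioi 0) := by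
    apply Integrable.mono'
      (((integrable_phi.comp_add_left a).integrableOn (s := Ioi 0)).const_mul (4 * a⁻¹))
      ((continuous_const.mul
        (continuous_Psi.comp (continuous_const.add continuous_id))).aestronglyMeasurable.restrict)
    filter_upwards [ae_restrict_mem measurableSet_Ioi] with b hb
    have hab : 0 < a + b := by linarith [mem_Ioi.mp hb]
    have h1 : (a + b) * Psi (a + b) ≤ stdGaussianPDF (a + b) := mul_Psi_le hab
    have h2 : Psi (a + b) ≤ a⁻¹ * stdGaussianPDF (a + b) := by
      rw [le_inv_mul_iff₀ ha]
      calc a * Psi (a + b) ≤ (a + b) * Psi (a + b) :=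
        mul_le_mul_of_nonneg_right (by linarith [mem_Ioi.mp hb]) (Psi_nonneg _)
      _ ≤ _ := h1
    simp only [Function.comp, id_eq, Real.norm_eq_abs, Pi.mul_apply, Pi.add_apply, Function.comp_apply]
    rw [abs_of_nonneg (mul_nonneg (by norm_num : (0:ℝ) ≤ 4) (Psi_nonneg (a + b)))]
    calc 4 * Psi (a + b) ≤ 4 * (a⁻¹ * stdGaussianPDF (a + b)) := by linarith
    _ = 4 * a⁻¹ * stdGaussianPDF (a + b) := by ring
  have h := integral_Ioi_of_hasDerivAt_of_tendsto' (a := (0:ℝ))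
    (f := fun b => 4 * ((a + b) * Psi (a + b) - stdGaussianPDF (a + b)))
    (f' := fun b => 4 * Psi (a + b)) (m := 0)
    (fun b _ => by
      have hadd : HasDerivAt (fun b : ℝ => a + b) 1 b := (hasDerivAt_id b).const_add a
      have hphi : HasDerivAt (fun b : ℝ => stdGaussianPDF (a + b))
          (-(a + b) * stdGaussianPDF (a + b) * 1) b :=
        (hasDerivAt_phi (a + b)).comp b hadd
      have hpsi : HasDerivAt (fun b : ℝ => Psi (a + b)) (-stdGaussianPDF (a + b) * 1) b :=
        (hasDerivAt_Psi (a + b)).comp b hadd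
      have h1 := ((hadd.fun_mul hpsi).fun_sub hphi).const_mul (4:ℝ)
      refine h1.congr_deriv ?_
      ring)
    hint
    (by
      have ht : Tendsto (fun b : ℝ => a + b) atTop atTop := tendsto_atTop_add_const_left atTop a tendsto_id
      have := ((tendsto_mul_Psi.comp ht).sub (tendsto_phi.comp ht)).const_mul (4:ℝ)
      simpa using this)
  rw [h]
  simp only [add_zero, zero_sub]
  ring

lemma outer_integral : ∫ x in Ioi (0:ℝ), x * Psi x = 1 / 4 := by
  have h := integral_Ioi_of_hasDerivAt_of_tendsto' (a := (0:ℝ))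
    (f := fun x => (x ^ 2 - 1) / 2 * Psi x - x / 2 * stdGaussianPDF x)
    (f' := fun x => x * Psi x) (m := 0)
    (fun x _ => by
      have h1 : HasDerivAt (fun x : ℝ => (x ^ 2 - 1) / 2) x x := by
        have := ((hasDerivAt_pow 2 x).sub_const 1).div_const 2
        refine this.congr_deriv ?_
        simp
      have h2 : HasDerivAt (fun x : ℝ => x / 2) (1/2) x := (hasDerivAt_id x).div_const 2
      have h3 := (h1.fun_mul (hasDerivAt_Psi x)).fun_sub (h2.fun_mul (hasDerivAt_phi x))
      refine h3.congr_deriv ?_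
      ring)
    mul_Psi_integrableOn
    (by
      have h1 : Tendsto (fun x : ℝ => (1:ℝ)/2 * (x ^ 2 * Psi x) - 1/2 * Psi x
          - 1/2 * (x * stdGaussianPDF x)) atTop (nhds 0) := by
        have := ((tendsto_sq_mul_Psi.const_mul (1/2:ℝ)).sub
          (tendsto_Psi.const_mul (1/2:ℝ))).sub (tendsto_id_mul_phi.const_mul (1/2:ℝ))
        simpa using this
      refine Tendsto.congr (fun x => ?_) h1
      ring)
  rw [h]
  norm_num [Psi_zero]

end F3Aux

theorem f3_is_probability_density :
    ∫ a in Ioi (0 : ℝ), ∫ b in Ioi (0 : ℝ), ∫ y in Ioi (0 : ℝ),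
      4 * y * (a + b + y) * stdGaussianPDF (a + b + y) = 1 := by
  have step1 : ∀ a ∈ Ioi (0:ℝ), (∫ b in Ioi (0:ℝ), ∫ y in Ioi (0:ℝ),
      4 * y * (a + b + y) * stdGaussianPDF (a + b + y))
      = 4 * (stdGaussianPDF a - a * F3Aux.Psi a) := by
    intro a ha
    rw [← F3Aux.mid_integral (mem_Ioi.mp ha)]
    apply setIntegral_congr_fun measurableSet_Ioi
    intro b _
    exact F3Aux.inner_integral (a + b)
  rw [setIntegral_congr_fun measurableSet_Ioi step1]
  have hsplit : ∫ a in Ioi (0:ℝ), 4 * (stdGaussianPDF a - a * F3Aux.Psi a)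
      = 4 * ((∫ a in Ioi (0:ℝ), stdGaussianPDF a) - ∫ a in Ioi (0:ℝ), a * F3Aux.Psi a) := by
    rw [← integral_sub F3Aux.integrable_phi.integrableOn F3Aux.mul_Psi_integrableOn, ← integral_const_mul]

  rw [hsplit, F3Aux.outer_integral]
  have : (∫ a in Ioi (0:ℝ), stdGaussianPDF a) = 1/2 := F3Aux.Psi_zero
  rw [this]
  norm_num
end

section
/- If a random vector (A,B,Y) on (0,∞)³ has joint density f₃(a,b,y) = 4y(a+b+y)φ(a+b+y), then the pair (A+B, Y) = (K(1), K(1)-B(1)) has joint density g(k,y) = 4ky(k+y)φ(k+y) on (0,∞)², and in particular this pair is exchangeable: (A+B, Y) has the same distribution as (Y, A+B). -/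
open MeasureTheory ProbabilityTheory Set Real

namespace PairAux

noncomputable def f3 : ℝ × ℝ × ℝ → ENNReal := fun p => ENNReal.ofReal
  (if 0 < p.1 ∧ 0 < p.2.1 ∧ 0 < p.2.2 then
    4 * p.2.2 * (p.1 + p.2.1 + p.2.2) * stdGaussianPDF (p.1 + p.2.1 + p.2.2) else 0)

noncomputable def g2 : ℝ × ℝ → ENNReal := fun p => ENNReal.ofReal
  (if 0 < p.1 ∧ 0 < p.2 then 4 * p.1 * p.2 * (p.1 + p.2) * stdGaussianPDF (p.1 + p.2) else 0)

lemma cont_std : Continuous stdGaussianPDF := by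
  unfold stdGaussianPDF; fun_prop

lemma meas_f3 : Measurable f3 := by
  apply Measurable.ennreal_ofReal
  apply Measurable.ite
  · exact (measurableSet_lt measurable_const measurable_fst).inter
      ((measurableSet_lt measurable_const (measurable_fst.comp measurable_snd)).inter
       (measurableSet_lt measurable_const (measurable_snd.comp measurable_snd)))
  · exact ((measurable_const.mul (measurable_snd.comp measurable_snd)).mul
      ((measurable_fst.add (measurable_fst.comp measurable_snd)).add
        (measurable_snd.comp measurable_snd))).mul
      (cont_std.measurable.comp ((measurable_fst.add
        (measurable_fst.comp measurable_snd)).add (measurable_snd.comp measurable_snd)))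
  · exact measurable_const

lemma meas_g2 : Measurable g2 := by
  apply Measurable.ennreal_ofReal
  apply Measurable.ite
  · exact (measurableSet_lt measurable_const measurable_fst).inter
      (measurableSet_lt measurable_const measurable_snd)
  · exact (((measurable_const.mul measurable_fst).mul measurable_snd).mul
      (measurable_fst.add measurable_snd)).mul
      (cont_std.measurable.comp (measurable_fst.add measurable_snd))
  · exact measurable_const

lemma g2_swap (p : ℝ × ℝ) : g2 p.swap = g2 p := by
  rcases p with ⟨k, y⟩
  by_cases h1 : 0 < k <;> by_cases h2 : 0 < y <;>
    simp [g2, h1, h2]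
  rw [add_comm y k]; ring_nf

lemma lint3 (F : ℝ × ℝ × ℝ → ENNReal) (hF : Measurable F) :
    ∫⁻ p, F p = ∫⁻ a, ∫⁻ b, ∫⁻ y, F (a, b, y) := by
  rw [show (volume : Measure (ℝ × ℝ × ℝ)) = (volume : Measure ℝ).prod volume from rfl,
    lintegral_prod _ hF.aemeasurable]
  refine lintegral_congr fun a => ?_
  exact lintegral_prod (fun q => F (a, q)) ((hF.comp measurable_prodMk_left).aemeasurable)

lemma lint2 (F : ℝ × ℝ → ENNReal) (hF : Measurable F) :
    ∫⁻ p, F p = ∫⁻ a, ∫⁻ b, F (a, b) := by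
  rw [show (volume : Measure (ℝ × ℝ)) = (volume : Measure ℝ).prod volume from rfl,
    lintegral_prod _ hF.aemeasurable]

lemma key (s : Set (ℝ × ℝ)) (hs : MeasurableSet s) :
    (volume.withDensity f3) ((fun p : ℝ × ℝ × ℝ => (p.1 + p.2.1, p.2.2)) ⁻¹' s)
      = (volume.withDensity g2) s := by
  set I : ℝ × ℝ → ENNReal := s.indicator 1 with hIdef
  have hImeas : Measurable I := measurable_one.indicator hs
  have hh : Measurable (fun p : ℝ × ℝ × ℝ => (p.1 + p.2.1, p.2.2)) := by fun_prop
  have hpre : MeasurableSet ((fun p : ℝ × ℝ × ℝ => (p.1 + p.2.1, p.2.2)) ⁻¹' s) := hh hs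
  rw [withDensity_apply _ hpre, withDensity_apply _ hs,
    ← lintegral_indicator hpre, ← lintegral_indicator hs]
  have hL1 : ∫⁻ p, ((fun p : ℝ × ℝ × ℝ => (p.1 + p.2.1, p.2.2)) ⁻¹' s).indicator f3 p
      = ∫⁻ a, ∫⁻ b, ∫⁻ y, f3 (a, b, y) * I (a + b, y) := by
    have heq : ∀ p : ℝ × ℝ × ℝ,
        ((fun p : ℝ × ℝ × ℝ => (p.1 + p.2.1, p.2.2)) ⁻¹' s).indicator f3 p
        = f3 p * I (p.1 + p.2.1, p.2.2) := by
      intro p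
      by_cases h : (p.1 + p.2.1, p.2.2) ∈ s <;>
        simp [hIdef, Set.indicator_apply, h, Set.mem_preimage]
    rw [lintegral_congr heq]
    exact lint3 (fun p => f3 p * I (p.1 + p.2.1, p.2.2)) (meas_f3.mul (hImeas.comp hh))
  have hL2 : ∫⁻ a, ∫⁻ b, ∫⁻ y, f3 (a, b, y) * I (a + b, y)
      = ∫⁻ a, ∫⁻ k, ∫⁻ y, f3 (a, k - a, y) * I (k, y) := by
    refine lintegral_congr fun a => ?_
    rw [← lintegral_add_left_eq_self (fun k => ∫⁻ y, f3 (a, k - a, y) * I (k, y)) a]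
    refine lintegral_congr fun b => ?_
    simp [add_sub_cancel_left]
  have hmeasInner : Measurable (Function.uncurry
      fun a k => ∫⁻ y, f3 (a, k - a, y) * I (k, y)) := by
    apply Measurable.lintegral_prod_right
      (f := fun (z : ℝ × ℝ) (y : ℝ) => f3 (z.1, z.2 - z.1, y) * I (z.2, y))
    exact (meas_f3.comp (by fun_prop)).mul (hImeas.comp (by fun_prop))
  have hL3 : ∫⁻ a, ∫⁻ k, ∫⁻ y, f3 (a, k - a, y) * I (k, y)
      = ∫⁻ k, ∫⁻ a, ∫⁻ y, f3 (a, k - a, y) * I (k, y) :=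
    lintegral_lintegral_swap hmeasInner.aemeasurable
  have hL4 : ∀ k : ℝ, ∫⁻ a, ∫⁻ y, f3 (a, k - a, y) * I (k, y)
      = ∫⁻ y, g2 (k, y) * I (k, y) := by
    intro k
    set w : ℝ → ENNReal := fun y => ENNReal.ofReal
      (if 0 < y then 4 * y * (k + y) * stdGaussianPDF (k + y) else 0) with hw
    have hf3pt : ∀ a y : ℝ, f3 (a, k - a, y)
        = (Set.Ioo (0:ℝ) k).indicator (fun _ => w y) a := by
      intro a y
      have hsum : a + (k - a) + y = k + y := by ring
      by_cases ha : a ∈ Set.Ioo (0:ℝ) k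
      · have h1 : 0 < a := ha.1
        have h2 : 0 < k - a := sub_pos.mpr ha.2
        simp [f3, hw, h1, h2, hsum, Set.indicator_of_mem ha]
      · rw [Set.indicator_of_notMem ha]
        have hcon : ¬(0 < a ∧ 0 < k - a ∧ 0 < y) := by
          rintro ⟨h1, h2, _⟩; exact ha ⟨h1, by linarith [sub_pos.mp h2]⟩
        simp only [f3]
        rw [if_neg hcon, ENNReal.ofReal_zero]
    calc ∫⁻ a, ∫⁻ y, f3 (a, k - a, y) * I (k, y)
        = ∫⁻ a, (Set.Ioo (0:ℝ) k).indicator (fun _ => ∫⁻ y, w y * I (k, y)) a := by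
          refine lintegral_congr fun a => ?_
          by_cases ha : a ∈ Set.Ioo (0:ℝ) k
          · rw [Set.indicator_of_mem ha]
            refine lintegral_congr fun y => ?_
            rw [hf3pt, Set.indicator_of_mem ha]
          · rw [Set.indicator_of_notMem ha, ← lintegral_zero]
            refine lintegral_congr fun y => ?_
            rw [hf3pt, Set.indicator_of_notMem ha, zero_mul]
      _ = (∫⁻ y, w y * I (k, y)) * volume (Set.Ioo (0:ℝ) k) :=
          lintegral_indicator_const measurableSet_Ioo _
      _ = ENNReal.ofReal k * ∫⁻ y, w y * I (k, y) := by
          rw [Real.volume_Ioo, sub_zero, mul_comm]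
      _ = ∫⁻ y, ENNReal.ofReal k * (w y * I (k, y)) :=
          (lintegral_const_mul' _ _ ENNReal.ofReal_ne_top).symm
      _ = ∫⁻ y, g2 (k, y) * I (k, y) := by
          refine lintegral_congr fun y => ?_
          rw [← mul_assoc]
          congr 1
          by_cases hk : 0 < k
          · by_cases hy : 0 < y
            · rw [hw]
              simp only [g2, hy, if_true, hk, and_self, ← ENNReal.ofReal_mul hk.le]
              congr 1; ring
            · simp [g2, hw, hk, hy]
          · simp [g2, hw, hk, ENNReal.ofReal_of_nonpos (not_lt.mp hk)]
  have hR : ∫⁻ q, s.indicator g2 q = ∫⁻ k, ∫⁻ y, g2 (k, y) * I (k, y) := by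
    have heq : ∀ q : ℝ × ℝ, s.indicator g2 q = g2 q * I q := by
      intro q; by_cases h : q ∈ s <;> simp [hIdef, Set.indicator_apply, h]
    rw [lintegral_congr heq]
    exact lint2 (fun q => g2 q * I q) (meas_g2.mul hImeas)
  rw [hL1, hL2, hL3, hR]
  exact lintegral_congr fun k => hL4 k

lemma swap_invariant : Measure.map Prod.swap (volume.withDensity g2)
    = volume.withDensity g2 := by
  ext s hs
  rw [Measure.map_apply measurable_swap hs, withDensity_apply _ (measurable_swap hs),
    withDensity_apply _ hs, ← lintegral_indicator (measurable_swap hs),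
    ← lintegral_indicator hs]
  have heq : ∀ q : ℝ × ℝ, (Prod.swap ⁻¹' s).indicator g2 q
      = (fun r : ℝ × ℝ => g2 r.swap * s.indicator 1 r) (Prod.swap q) := by
    intro q
    by_cases h : Prod.swap q ∈ s <;> simp [Set.indicator_apply, h]
  rw [lintegral_congr heq]
  rw [show (volume : Measure (ℝ × ℝ)) = (volume : Measure ℝ).prod volume from rfl]
  rw [Measure.measurePreserving_swap.lintegral_comp
    (f := fun r : ℝ × ℝ => g2 r.swap * s.indicator 1 r)
    ((meas_g2.comp measurable_swap).mul (measurable_one.indicator hs))]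
  refine lintegral_congr fun r => ?_
  by_cases h : r ∈ s <;> simp [Set.indicator_apply, h, g2_swap]

end PairAux

theorem pair_density_and_exchangeable
    {Ω : Type*} [MeasureSpace Ω] [IsProbabilityMeasure (ℙ : Measure Ω)]
    (X : Ω → ℝ × ℝ × ℝ) (hMX : Measurable X)
    (hX : Measure.map X ℙ
      = volume.withDensity (fun p : ℝ × ℝ × ℝ => ENNReal.ofReal
          (if 0 < p.1 ∧ 0 < p.2.1 ∧ 0 < p.2.2 then
            4 * p.2.2 * (p.1 + p.2.1 + p.2.2) * stdGaussianPDF (p.1 + p.2.1 + p.2.2)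
          else 0))) :
    Measure.map (fun ω => ((X ω).1 + (X ω).2.1, (X ω).2.2)) ℙ
      = volume.withDensity (fun p : ℝ × ℝ => ENNReal.ofReal
          (if 0 < p.1 ∧ 0 < p.2 then
            4 * p.1 * p.2 * (p.1 + p.2) * stdGaussianPDF (p.1 + p.2) else 0))
    ∧ Measure.map (fun ω => ((X ω).1 + (X ω).2.1, (X ω).2.2)) ℙ
      = Measure.map (fun ω => ((X ω).2.2, (X ω).1 + (X ω).2.1)) ℙ := by
  have hh : Measurable (fun p : ℝ × ℝ × ℝ => (p.1 + p.2.1, p.2.2)) := by fun_prop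
  have hmap : Measure.map (fun ω => ((X ω).1 + (X ω).2.1, (X ω).2.2)) ℙ
      = volume.withDensity PairAux.g2 := by
    have hcomp : (fun ω => ((X ω).1 + (X ω).2.1, (X ω).2.2))
        = (fun p : ℝ × ℝ × ℝ => (p.1 + p.2.1, p.2.2)) ∘ X := rfl
    rw [hcomp, ← Measure.map_map hh hMX, hX]
    exact Measure.ext fun s hs => by
      rw [Measure.map_apply hh hs]; exact PairAux.key s hs
  refine ⟨hmap, ?_⟩
  have hswap : (fun ω => ((X ω).2.2, (X ω).1 + (X ω).2.1))
      = Prod.swap ∘ (fun ω => ((X ω).1 + (X ω).2.1, (X ω).2.2)) := rfl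
  rw [hmap, hswap, ← Measure.map_map measurable_swap
    (show Measurable (fun ω => ((X ω).1 + (X ω).2.1, (X ω).2.2)) from hh.comp hMX),
    hmap, PairAux.swap_invariant]
end

section
/- The map h on (0,∞)³ × (0,1) defined by h(t,r,q,u) = (u²(t+q), u(1-u)(t+q) + ur, r²q/(t(t+q)), r/(r + (1-u)(t+q))) is injective. -/
open Set

noncomputable def ouakiPitmanMap (p : ℝ × ℝ × ℝ × ℝ) : ℝ × ℝ × ℝ × ℝ :=
  let t := p.1; let r := p.2.1; let q := p.2.2.1; let u := p.2.2.2
  (u ^ 2 * (t + q), u * (1 - u) * (t + q) + u * r,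
    r ^ 2 * q / (t * (t + q)), r / (r + (1 - u) * (t + q)))

theorem ouakiPitmanMap_injective :
    Set.InjOn ouakiPitmanMap (Ioi (0 : ℝ) ×ˢ Ioi (0 : ℝ) ×ˢ Ioi (0 : ℝ) ×ˢ Ioo (0 : ℝ) 1) := by
  rintro ⟨t1, r1, q1, u1⟩ hp1 ⟨t2, r2, q2, u2⟩ hp2 heq
  simp only [mem_prod, mem_Ioi, mem_Ioo] at hp1 hp2
  obtain ⟨ht1, hr1, hq1, hu1, hu1'⟩ := hp1
  obtain ⟨ht2, hr2, hq2, hu2, hu2'⟩ := hp2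
  simp only [ouakiPitmanMap, Prod.mk.injEq] at heq
  obtain ⟨ha, hb, hc, hd⟩ := heq
  have hs1 : (0 : ℝ) < t1 + q1 := by linarith
  have hs2 : (0 : ℝ) < t2 + q2 := by linarith
  have hD1 : (0 : ℝ) < r1 + (1 - u1) * (t1 + q1) := by nlinarith
  have hD2 : (0 : ℝ) < r2 + (1 - u2) * (t2 + q2) := by nlinarith
  -- identity: u * s = a + b * (1 - d)
  have key1 : u1 * (t1 + q1) =
      u1 ^ 2 * (t1 + q1) + (u1 * (1 - u1) * (t1 + q1) + u1 * r1) *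
        (1 - r1 / (r1 + (1 - u1) * (t1 + q1))) := by
    field_simp
    ring
  have key2 : u2 * (t2 + q2) =
      u2 ^ 2 * (t2 + q2) + (u2 * (1 - u2) * (t2 + q2) + u2 * r2) *
        (1 - r2 / (r2 + (1 - u2) * (t2 + q2))) := by
    field_simp
    ring
  have hus : u1 * (t1 + q1) = u2 * (t2 + q2) := by
    rw [key1, key2, ha, hb, hd]
  have huspos : (0 : ℝ) < u1 * (t1 + q1) := by positivity
  have hu : u1 = u2 := by
    have : u1 * (u1 * (t1 + q1)) = u2 * (u1 * (t1 + q1)) := by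
      rw [hus]; nlinarith [ha]
    exact mul_right_cancel₀ (ne_of_gt huspos) this
  have hs : t1 + q1 = t2 + q2 := by
    have := hus
    rw [hu] at this
    exact mul_left_cancel₀ (ne_of_gt hu2) this
  have hr : r1 = r2 := by
    have h' : u1 * r1 = u1 * r2 := by
      rw [hu] at hb ⊢
      rw [hs] at hb
      linarith
    exact mul_left_cancel₀ (ne_of_gt (hu ▸ hu1)) h'
  have ht : t1 = t2 := by
    have hne1 : t1 * (t1 + q1) ≠ 0 := by positivity
    have hne2 : t2 * (t2 + q2) ≠ 0 := by positivity
    have hcross := (div_eq_div_iff hne1 hne2).mp hc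
    rw [hr, hs] at hcross
    have hq1t2 : q1 * t2 = q2 * t1 := by
      have hpos : (0 : ℝ) < r2 ^ 2 * (t2 + q2) := by positivity
      have h' : q1 * t2 * (r2 ^ 2 * (t2 + q2)) = q2 * t1 * (r2 ^ 2 * (t2 + q2)) := by
        linear_combination hcross
      exact mul_right_cancel₀ (ne_of_gt hpos) h'
    have hz : (t2 - t1) * (t2 + q2) = 0 := by linear_combination hq1t2 - t2 * hs
    rcases mul_eq_zero.mp hz with h | h
    · linarith
    · linarith
  have hq : q1 = q2 := by linarith
  simp [ht, hr, hq, hu]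
end

section
/- Let χ₃ have the chi(3) distribution and β ~ beta(1,2), independent. Then χ₃(1-β) has density f(t) = 4t·Φ̄(t) for t > 0, where Φ̄(t) = ∫_t^∞ φ(x) dx is the standard normal tail. -/
open MeasureTheory Set ProbabilityTheory Real

/-- The standard normal tail function. -/
noncomputable def stdGaussianTail (t : ℝ) : ℝ := ∫ x in Ioi t, stdGaussianPDF x

lemma pdf_eq (x : ℝ) : stdGaussianPDF x
    = (Real.sqrt (2 * Real.pi))⁻¹ * Real.exp (-(1/2) * x ^ 2) := by
  rw [stdGaussianPDF]; ring_nf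

lemma pdf_nonneg (x : ℝ) : 0 ≤ stdGaussianPDF x :=
  mul_nonneg (inv_nonneg.2 (Real.sqrt_nonneg _)) (Real.exp_pos _).le

lemma pdf_cont : Continuous stdGaussianPDF := by
  unfold stdGaussianPDF; fun_prop

lemma pdf_integrable : Integrable stdGaussianPDF := by
  simp only [funext pdf_eq]
  exact (integrable_exp_neg_mul_sq (by norm_num : (0:ℝ) < 1/2)).const_mul _

lemma sq_pdf_integrable : Integrable (fun x : ℝ => 2 * x ^ 2 * stdGaussianPDF x) := by
  have h : Integrable (fun x : ℝ => x ^ (2:ℝ) * Real.exp (-(1/2) * x ^ 2)) :=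
    integrable_rpow_mul_exp_neg_mul_sq (by norm_num) (by norm_num)
  have h2 : Integrable (fun x : ℝ => x ^ 2 * Real.exp (-(1/2) * x ^ 2)) := by
    have := funext fun x : ℝ => Real.rpow_natCast x 2
    simpa [this] using h
  have := (h2.const_mul (2 * (Real.sqrt (2 * Real.pi))⁻¹))
  refine this.congr ?_
  refine Filter.Eventually.of_forall fun x => ?_
  simp only [pdf_eq]; ring

lemma tail_sub {a b : ℝ} (h : a ≤ b) :
    stdGaussianTail a = (∫ x in Ioc a b, stdGaussianPDF x) + stdGaussianTail b := by
  rw [stdGaussianTail, stdGaussianTail, ← Ioc_union_Ioi_eq_Ioi h,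
    setIntegral_union Ioc_disjoint_Ioi_same measurableSet_Ioi
      pdf_integrable.integrableOn pdf_integrable.integrableOn]

lemma tail_eq (t : ℝ) :
    stdGaussianTail t = stdGaussianTail 0 - ∫ x in (0:ℝ)..t, stdGaussianPDF x := by
  rcases le_total 0 t with h | h
  · rw [intervalIntegral.integral_of_le h]
    have := tail_sub h
    linarith
  · rw [intervalIntegral.integral_of_ge h]
    have := tail_sub h
    linarith

lemma tail_hasDerivAt (t : ℝ) : HasDerivAt stdGaussianTail (-stdGaussianPDF t) t := by
  have hF : HasDerivAt (fun u => ∫ x in (0:ℝ)..u, stdGaussianPDF x) (stdGaussianPDF t) t :=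
    intervalIntegral.integral_hasDerivAt_right pdf_integrable.intervalIntegrable
      pdf_cont.aestronglyMeasurable.stronglyMeasurableAtFilter pdf_cont.continuousAt
  have : stdGaussianTail = fun u => stdGaussianTail 0 - ∫ x in (0:ℝ)..u, stdGaussianPDF x :=
    funext tail_eq
  rw [this]
  exact ((hasDerivAt_const t (stdGaussianTail 0)).sub hF).congr_deriv (by ring)

lemma tail_cont : Continuous stdGaussianTail := by
  have : Differentiable ℝ stdGaussianTail := fun t => (tail_hasDerivAt t).differentiableAt
  exact this.continuous

lemma tail_nonneg (t : ℝ) : 0 ≤ stdGaussianTail t :=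
  setIntegral_nonneg measurableSet_Ioi fun x _ => pdf_nonneg x

lemma key_identity (t : ℝ) :
    ∫ s in (0:ℝ)..t, 4 * s * stdGaussianTail s
      = (∫ x in (0:ℝ)..t, 2 * x ^ 2 * stdGaussianPDF x) + 2 * t ^ 2 * stdGaussianTail t := by
  set H : ℝ → ℝ := fun t => (∫ s in (0:ℝ)..t, 4 * s * stdGaussianTail s)
    - (∫ x in (0:ℝ)..t, 2 * x ^ 2 * stdGaussianPDF x) - 2 * t ^ 2 * stdGaussianTail t with hH
  have hcont1 : Continuous fun s : ℝ => 4 * s * stdGaussianTail s := by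
    exact (continuous_const.mul continuous_id).mul tail_cont
  have hcont2 : Continuous fun x : ℝ => 2 * x ^ 2 * stdGaussianPDF x := by
    exact (continuous_const.mul (continuous_pow 2)).mul pdf_cont
  have hderiv : ∀ u : ℝ, HasDerivAt H 0 u := by
    intro u
    have h1 : HasDerivAt (fun v => ∫ s in (0:ℝ)..v, 4 * s * stdGaussianTail s)
        (4 * u * stdGaussianTail u) u :=
      intervalIntegral.integral_hasDerivAt_right (hcont1.intervalIntegrable _ _)
        hcont1.aestronglyMeasurable.stronglyMeasurableAtFilter hcont1.continuousAt
    have h2 : HasDerivAt (fun v => ∫ x in (0:ℝ)..v, 2 * x ^ 2 * stdGaussianPDF x)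
        (2 * u ^ 2 * stdGaussianPDF u) u :=
      intervalIntegral.integral_hasDerivAt_right (hcont2.intervalIntegrable _ _)
        hcont2.aestronglyMeasurable.stronglyMeasurableAtFilter hcont2.continuousAt
    have h3 : HasDerivAt (fun v : ℝ => 2 * v ^ 2 * stdGaussianTail v)
        (2 * (2 * u) * stdGaussianTail u + 2 * u ^ 2 * (-stdGaussianPDF u)) u := by
      have hp : HasDerivAt (fun v : ℝ => 2 * v ^ 2) (2 * (2 * u)) u := by
        simpa using ((hasDerivAt_pow 2 u).const_mul (2:ℝ))
      exact hp.mul (tail_hasDerivAt u)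
    have := (h1.sub h2).sub h3
    exact this.congr_deriv (by ring)
  have hdiff : Differentiable ℝ H := fun u => (hderiv u).differentiableAt
  have hd0 : ∀ u, deriv H u = 0 := fun u => (hderiv u).deriv
  have hH0 : H t = H 0 := is_const_of_deriv_eq_zero hdiff hd0 t 0
  have : H 0 = 0 := by simp [hH]
  rw [this] at hH0
  have := hH0
  simp only [hH] at this
  linarith

lemma betaIci (a : ℝ) :
    (volume.withDensity (fun u => ENNReal.ofReal
        (if u ∈ Ioo (0 : ℝ) 1 then 2 * (1 - u) else 0))) (Ici a)
      = ENNReal.ofReal ((max 0 (min 1 (1 - a))) ^ 2) := by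
  rw [withDensity_apply _ measurableSet_Ici]
  have hind : (fun u : ℝ => ENNReal.ofReal (if u ∈ Ioo (0 : ℝ) 1 then 2 * (1 - u) else 0))
      = (Ioo (0:ℝ) 1).indicator (fun u => ENNReal.ofReal (2 * (1 - u))) := by
    funext u
    by_cases h : u ∈ Ioo (0:ℝ) 1 <;> simp [h, indicator]
  rw [hind, lintegral_indicator measurableSet_Ioo, Measure.restrict_restrict measurableSet_Ioo]
  by_cases ha : 1 ≤ a
  · have hempty : Ioo (0:ℝ) 1 ∩ Ici a = ∅ := by
      ext u; simp only [mem_inter_iff, mem_Ioo, mem_Ici, mem_empty_iff_false, iff_false]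
      rintro ⟨⟨_, h1⟩, h2⟩; linarith
    rw [hempty]
    have : min 1 (1 - a) = 1 - a := min_eq_right (by linarith)
    rw [this]
    have : max 0 (1 - a) = 0 := max_eq_left (by linarith)
    rw [this]
    simp
  · push_neg at ha
    set m : ℝ := max a 0 with hm
    have hm1 : m < 1 := by
      rw [hm]; exact max_lt ha one_pos
    have hm0 : 0 ≤ m := le_max_right _ _
    have hseteq : ∫⁻ u in Ioo (0:ℝ) 1 ∩ Ici a, ENNReal.ofReal (2 * (1 - u))
        = ∫⁻ u in Ioo m 1, ENNReal.ofReal (2 * (1 - u)) := by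
      rcases le_or_gt a 0 with h0 | h0
      · have : Ioo (0:ℝ) 1 ∩ Ici a = Ioo m 1 := by
          rw [hm, max_eq_right h0]
          ext u; simp only [mem_inter_iff, mem_Ioo, mem_Ici]
          constructor
          · rintro ⟨⟨h1, h2⟩, _⟩; exact ⟨h1, h2⟩
          · rintro ⟨h1, h2⟩; exact ⟨⟨h1, h2⟩, by linarith⟩
        rw [this]
      · have hIco : Ioo (0:ℝ) 1 ∩ Ici a = Ico a 1 := by
          ext u; simp only [mem_inter_iff, mem_Ioo, mem_Ici, mem_Ico]
          constructor
          · rintro ⟨⟨_, h2⟩, h3⟩; exact ⟨h3, h2⟩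
          · rintro ⟨h1, h2⟩; exact ⟨⟨by linarith, h2⟩, h1⟩
        rw [hIco, hm, max_eq_left h0.le]
        exact setLIntegral_congr (Ioo_ae_eq_Ico).symm
    rw [hseteq]
    have hInt : IntegrableOn (fun u : ℝ => 2 * (1 - u)) (Ioo m 1) := by
      have hc : Continuous fun u : ℝ => 2 * (1 - u) := by fun_prop
      exact (hc.integrableOn_Icc (a := m) (b := 1)).mono_set Ioo_subset_Icc_self
    rw [← ofReal_integral_eq_lintegral_ofReal hInt]
    · congr 1
      rw [← integral_Ioc_eq_integral_Ioo, ← intervalIntegral.integral_of_le hm1.le]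
      have : ∫ u in m..1, 2 * (1 - u) = 2 * (1 - m) - (1 - m ^ 2) := by
        have h1 : ∫ u in m..1, (2 : ℝ) - 2 * u
            = (∫ _ in m..1, (2:ℝ)) - ∫ u in m..1, 2 * u := by
          apply intervalIntegral.integral_sub intervalIntegrable_const
          exact (continuous_const.mul continuous_id).intervalIntegrable _ _
        have h2 : ∫ u in m..1, 2 * u = 2 * ∫ u in m..1, u := by
          exact intervalIntegral.integral_const_mul _ _
        have h3 : (∫ u in m..1, u) = ((1:ℝ) ^ 2 - m ^ 2) / 2 := integral_id
        calc ∫ u in m..1, 2 * (1 - u) = ∫ u in m..1, (2:ℝ) - 2 * u := by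
              congr 1; funext u; ring
          _ = 2 * (1 - m) - (1 - m ^ 2) := by
              rw [h1, h2, h3, intervalIntegral.integral_const]; simp [smul_eq_mul]; ring
      rw [this]
      have hmax : max 0 (min 1 (1 - a)) = 1 - m := by
        rcases le_total a 0 with h0 | h0
        · rw [hm, max_eq_right h0, min_eq_left (by linarith), max_eq_right (by norm_num)]
          norm_num
        · rw [hm, max_eq_left h0, min_eq_right (by linarith), max_eq_right (by linarith)]
      rw [hmax]; ring
    · filter_upwards [ae_restrict_mem measurableSet_Ioo] with u hu
      simp only [Pi.zero_apply]
      have := hu.2; linarith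

theorem chi3_times_one_sub_beta12_density
    {Ω : Type*} [MeasureSpace Ω] [IsProbabilityMeasure (ℙ : Measure Ω)]
    (C B : Ω → ℝ) (hMC : Measurable C) (hMB : Measurable B)
    (hC : Measure.map C ℙ
      = volume.withDensity (fun x => ENNReal.ofReal
          (if 0 < x then 2 * x ^ 2 * stdGaussianPDF x else 0)))
    (hB : Measure.map B ℙ
      = volume.withDensity (fun u => ENNReal.ofReal
          (if u ∈ Ioo (0 : ℝ) 1 then 2 * (1 - u) else 0)))
    (hInd : IndepFun C B ℙ) :
    Measure.map (fun ω => C ω * (1 - B ω)) ℙ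
      = volume.withDensity (fun t => ENNReal.ofReal
          (if 0 < t then 4 * t * stdGaussianTail t else 0)) := by
  have hg : Measurable fun p : ℝ × ℝ => p.1 * (1 - p.2) :=
    measurable_fst.mul (measurable_const.sub measurable_snd)
  set μC : Measure ℝ := volume.withDensity (fun x => ENNReal.ofReal
      (if 0 < x then 2 * x ^ 2 * stdGaussianPDF x else 0)) with hμC
  set μB : Measure ℝ := volume.withDensity (fun u => ENNReal.ofReal
      (if u ∈ Ioo (0 : ℝ) 1 then 2 * (1 - u) else 0)) with hμB
  have hmfC : Measurable fun x : ℝ => ENNReal.ofReal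
      (if 0 < x then 2 * x ^ 2 * stdGaussianPDF x else 0) := by
    apply Measurable.ennreal_ofReal
    exact Measurable.ite measurableSet_Ioi
      ((measurable_const.mul (measurable_id.pow_const 2)).mul pdf_cont.measurable)
      measurable_const
  have hmap : Measure.map (fun ω => C ω * (1 - B ω)) ℙ
      = Measure.map (fun p : ℝ × ℝ => p.1 * (1 - p.2)) (μC.prod μB) := by
    rw [← hC, ← hB,
      ← (indepFun_iff_map_prod_eq_prod_map_map hMC.aemeasurable hMB.aemeasurable).mp hInd,
      Measure.map_map hg (hMC.prodMk hMB)]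
    rfl
  haveI : IsProbabilityMeasure (Measure.map (fun ω => C ω * (1 - B ω)) ℙ) :=
    Measure.isProbabilityMeasure_map (hMC.mul (measurable_const.sub hMB)).aemeasurable
  refine Measure.ext_of_Iic _ _ fun t => ?_
  -- LHS computation
  set G : ℝ → ℝ := fun x => if 0 < x
      then 2 * x ^ 2 * stdGaussianPDF x * (max 0 (min 1 (t / x))) ^ 2 else 0 with hGdef
  have hGm : Measurable G := by
    rw [hGdef]
    refine Measurable.ite measurableSet_Ioi ?_ measurable_const
    have := pdf_cont.measurable
    fun_prop
  have hGnonneg : ∀ x, 0 ≤ G x := by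
    intro x
    by_cases hx : 0 < x
    · simp only [hGdef, if_pos hx]
      exact mul_nonneg (mul_nonneg (by positivity) (pdf_nonneg x)) (sq_nonneg _)
    · simp [hGdef, hx]
  have hGbound : ∀ x, ‖G x‖ ≤ 2 * x ^ 2 * stdGaussianPDF x := by
    intro x
    rw [Real.norm_of_nonneg (hGnonneg x)]
    simp only [hGdef]
    split_ifs with hx
    · have hc1 : max 0 (min 1 (t / x)) ≤ 1 := max_le zero_le_one (min_le_left _ _)
      have hc0 : (0:ℝ) ≤ max 0 (min 1 (t / x)) := le_max_left _ _
      have h2 : (max 0 (min 1 (t / x))) ^ 2 ≤ 1 := by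
        nlinarith
      exact mul_le_of_le_one_right (mul_nonneg (by positivity) (pdf_nonneg x)) h2
    · exact mul_nonneg (by positivity) (pdf_nonneg x)
  have hGint : Integrable G :=
    sq_pdf_integrable.mono' hGm.aestronglyMeasurable (Filter.Eventually.of_forall hGbound)
  have hLHS : Measure.map (fun ω => C ω * (1 - B ω)) ℙ (Iic t) = ENNReal.ofReal (∫ x, G x) := by
    rw [hmap, Measure.map_apply hg measurableSet_Iic,
      Measure.prod_apply (hg measurableSet_Iic)]
    have hslice : ∀ x : ℝ, 0 < x →
        (Prod.mk x ⁻¹' ((fun p : ℝ × ℝ => p.1 * (1 - p.2)) ⁻¹' Iic t)) = Ici (1 - t / x) := by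
      intro x hx
      ext u
      simp only [mem_preimage, mem_Iic, mem_Ici]
      rw [mul_comm, ← le_div_iff₀ hx, sub_le_comm]
    have hμCeq : μC = volume.withDensity (fun x => ENNReal.ofReal
        (if 0 < x then 2 * x ^ 2 * stdGaussianPDF x else 0)) := hμC
    rw [hμCeq, lintegral_withDensity_eq_lintegral_mul _ hmfC
      (measurable_measure_prodMk_left (hg measurableSet_Iic))]
    have hptwise : ∀ x : ℝ, (ENNReal.ofReal (if 0 < x then 2 * x ^ 2 * stdGaussianPDF x else 0))
        * μB (Prod.mk x ⁻¹' ((fun p : ℝ × ℝ => p.1 * (1 - p.2)) ⁻¹' Iic t))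
        = ENNReal.ofReal (G x) := by
      intro x
      by_cases hx : 0 < x
      · rw [hslice x hx, hμB, betaIci, sub_sub_cancel]
        simp only [hGdef, if_pos hx]
        rw [← ENNReal.ofReal_mul (mul_nonneg (by positivity) (pdf_nonneg x))]
      · simp [hGdef, hx]
    calc ∫⁻ x, (fun x => ENNReal.ofReal (if 0 < x then 2 * x ^ 2 * stdGaussianPDF x else 0)) x
          * μB (Prod.mk x ⁻¹' ((fun p : ℝ × ℝ => p.1 * (1 - p.2)) ⁻¹' Iic t)) ∂volume
        = ∫⁻ x, ENNReal.ofReal (G x) ∂volume := by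
          exact lintegral_congr fun x => hptwise x
      _ = ENNReal.ofReal (∫ x, G x) :=
          (ofReal_integral_eq_lintegral_ofReal hGint
            (Filter.Eventually.of_forall hGnonneg)).symm
  rw [hLHS]
  -- RHS computation
  have hindT : (fun s : ℝ => ENNReal.ofReal (if 0 < s then 4 * s * stdGaussianTail s else 0))
      = (Ioi (0:ℝ)).indicator (fun s => ENNReal.ofReal (4 * s * stdGaussianTail s)) := by
    funext s
    by_cases h : 0 < s <;> simp [h, indicator, mem_Ioi]
  rw [withDensity_apply _ measurableSet_Iic, hindT,
    lintegral_indicator measurableSet_Ioi, Measure.restrict_restrict measurableSet_Ioi]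
  have hset : Ioi (0:ℝ) ∩ Iic t = Ioc 0 t := by
    ext s; simp [mem_Ioc, mem_Ioi, mem_Iic, and_comm]
  rw [hset]
  by_cases ht : 0 ≤ t
  · -- RHS = ofReal (∫ s in 0..t, 4 s T s)
    have hTc : Continuous fun s : ℝ => 4 * s * stdGaussianTail s :=
      (continuous_const.mul continuous_id).mul tail_cont
    have hRHS : ∫⁻ s in Ioc (0:ℝ) t, ENNReal.ofReal (4 * s * stdGaussianTail s)
        = ENNReal.ofReal (∫ s in (0:ℝ)..t, 4 * s * stdGaussianTail s) := by
      rw [intervalIntegral.integral_of_le ht,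
        ← ofReal_integral_eq_lintegral_ofReal (hTc.integrableOn_Ioc)]
      filter_upwards [ae_restrict_mem measurableSet_Ioc] with s hs
      simp only [Pi.zero_apply]
      have := hs.1
      have := tail_nonneg s
      positivity
    rw [hRHS]
    congr 1
    -- real computation: ∫ G = ∫_0^t 4 s T s
    have hGsplit : ∫ x, G x = (∫ x in (0:ℝ)..t, 2 * x ^ 2 * stdGaussianPDF x)
        + 2 * t ^ 2 * stdGaussianTail t := by
      have hGind : G = (Ioi (0:ℝ)).indicator
          (fun x => 2 * x ^ 2 * stdGaussianPDF x * (max 0 (min 1 (t / x))) ^ 2) := by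
        funext x
        by_cases hx : 0 < x <;> simp [hGdef, indicator, hx, mem_Ioi]
      have hint1 : IntegrableOn
          (fun x => 2 * x ^ 2 * stdGaussianPDF x * (max 0 (min 1 (t / x))) ^ 2)
          (Ioc 0 t) volume := by
        refine (hGint.integrableOn).congr_fun (fun x hx => ?_) measurableSet_Ioc
        simp [hGdef, hx.1]
      have hint2 : IntegrableOn
          (fun x => 2 * x ^ 2 * stdGaussianPDF x * (max 0 (min 1 (t / x))) ^ 2)
          (Ioi t) volume := by
        refine (hGint.integrableOn).congr_fun (fun x hx => ?_) measurableSet_Ioi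
        have : 0 < x := lt_of_le_of_lt ht hx
        simp [hGdef, this]
      rw [hGind, integral_indicator measurableSet_Ioi, ← Ioc_union_Ioi_eq_Ioi ht,
        setIntegral_union Ioc_disjoint_Ioi_same measurableSet_Ioi hint1 hint2]
      have hp1 : ∫ x in Ioc (0:ℝ) t, 2 * x ^ 2 * stdGaussianPDF x * (max 0 (min 1 (t / x))) ^ 2
          = ∫ x in (0:ℝ)..t, 2 * x ^ 2 * stdGaussianPDF x := by
        rw [intervalIntegral.integral_of_le ht]
        refine setIntegral_congr_fun measurableSet_Ioc fun x hx => ?_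
        have h1 : (1:ℝ) ≤ t / x := (one_le_div hx.1).2 hx.2
        rw [min_eq_left h1, max_eq_right zero_le_one]
        ring
      have hp2 : ∫ x in Ioi t, 2 * x ^ 2 * stdGaussianPDF x * (max 0 (min 1 (t / x))) ^ 2
          = 2 * t ^ 2 * stdGaussianTail t := by
        have : ∫ x in Ioi t, 2 * x ^ 2 * stdGaussianPDF x * (max 0 (min 1 (t / x))) ^ 2
            = ∫ x in Ioi t, 2 * t ^ 2 * stdGaussianPDF x := by
          refine setIntegral_congr_fun measurableSet_Ioi fun x hx => ?_
          have hx0 : 0 < x := lt_of_le_of_lt ht hx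
          have h1 : t / x ≤ 1 := (div_le_one hx0).2 (le_of_lt hx)
          have h0 : 0 ≤ t / x := div_nonneg ht hx0.le
          rw [min_eq_right h1, max_eq_right h0]
          field_simp
        rw [this, MeasureTheory.integral_const_mul, stdGaussianTail]
      rw [hp1, hp2]
    rw [hGsplit, key_identity]
  · push_neg at ht
    have hempty : Ioc (0:ℝ) t = ∅ := Ioc_eq_empty (by linarith)
    rw [hempty]
    have hG0 : ∀ x, G x = 0 := by
      intro x
      simp only [hGdef]
      split_ifs with hx
      · have : t / x < 0 := div_neg_of_neg_of_pos ht hx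
        have h1 : min 1 (t / x) = t / x := min_eq_right (by linarith)
        rw [h1, max_eq_left this.le]
        ring
      · rfl
    simp [funext hG0]
end
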